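/- Let G be a symmetric positive definite real k×k matrix, Σ a symmetric real k×k matrix, and J a real k×k matrix all of whose eigenvalues have strictly negative real part. If G Σ = -2 J, then Σ is invertible and Σ⁻¹ is symmetric positive definite. -/

import Mathlib

open Matrix

theorem sigma_inverse_posdef (k : ℕ)
    (G Sig J : Matrix (Fin k) (Fin k) ℝ)
    (hG : G.PosDef) (hSig : Sig.IsSymm)
    (hJ : ∀ (μ : ℂ) (v : Fin k → ℂ), v ≠ 0 →
      (J.map (Complex.ofReal : ℝ → ℂ)).mulVec v = μ • v → μ.re < 0)
    (heq : G * Sig = (-2 : ℝ) • J) :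
    IsUnit Sig.det ∧ (Sig⁻¹).PosDef := by
  classical
  set S := (open scoped MatrixOrder in CFC.sqrt G) with hSdef
  have hS2 : S * S = G := (open scoped MatrixOrder in CFC.sqrt_mul_sqrt_self G hG.posSemidef.nonneg)
  have hSps : S.PosSemidef := (open scoped MatrixOrder in (CFC.sqrt_nonneg G).posSemidef)
  have hSsymm : Sᵀ = S := by
    have h := hSps.1
    rwa [Matrix.IsHermitian, conjTranspose_eq_transpose_of_trivial] at h
  have hSdet : S.det ≠ 0 := by
    intro h
    have : G.det = 0 := by rw [← hS2, det_mul, h, mul_zero]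
    exact (ne_of_gt hG.det_pos) this
  have hSunit : IsUnit S.det := isUnit_iff_ne_zero.mpr hSdet
  set M := S * Sig * S with hM
  have hMherm : M.IsHermitian := by
    show Mᴴ = M
    simp only [hM, conjTranspose_eq_transpose_of_trivial]
    rw [transpose_mul, transpose_mul, hSsymm, hSig.eq, ← mul_assoc]
  -- eigenvalues of M are positive
  have heig : ∀ i, 0 < hMherm.eigenvalues i := by
    intro i
    set μ := hMherm.eigenvalues i with hμ
    set v : Fin k → ℝ := ⇑(hMherm.eigenvectorBasis i) with hv
    have hv0 : v ≠ 0 := by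
      have := hMherm.eigenvectorBasis.orthonormal.ne_zero i
      intro h
      apply this
      ext j
      exact congrFun h j
    have hmv : M *ᵥ v = μ • v := hMherm.mulVec_eigenvectorBasis i
    set w : Fin k → ℝ := S *ᵥ v with hw
    have hw0 : w ≠ 0 := by
      intro h
      apply hv0
      have : (S⁻¹ * S) *ᵥ v = 0 := by
        rw [← mulVec_mulVec, ← hw, h, mulVec_zero]
      rwa [nonsing_inv_mul S hSunit, one_mulVec] at this
    have hGSw : (G * Sig) *ᵥ w = μ • w := by
      have : (G * Sig) * S = S * M := by
        rw [← hS2, hM]; simp only [mul_assoc]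
      rw [hw, mulVec_mulVec, this, ← mulVec_mulVec, hmv, mulVec_smul]
    have hJw : J *ᵥ w = (-(μ/2)) • w := by
      have h2 : ((-2 : ℝ) • J) *ᵥ w = μ • w := by rw [← heq]; exact hGSw
      rw [smul_mulVec] at h2
      funext j
      have h3 := congrFun h2 j
      simp only [Pi.smul_apply, smul_eq_mul] at h3 ⊢
      linarith
    -- complexify
    set w' : Fin k → ℂ := fun j => Complex.ofReal (w j) with hw'
    have hw'0 : w' ≠ 0 := by
      intro h
      apply hw0
      funext j
      have := congrFun h j
      simpa [hw'] using this
    have hmap : (J.map (Complex.ofReal : ℝ → ℂ)).mulVec w'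
        = ((-(μ/2) : ℝ) : ℂ) • w' := by
      have h1 : ∀ j, (((J *ᵥ w) j : ℝ) : ℂ)
          = ((J.map (Complex.ofReal : ℝ → ℂ)) *ᵥ w') j := fun j =>
        RingHom.map_mulVec Complex.ofRealHom J w j
      funext j
      rw [← h1 j, hJw]
      simp only [Pi.smul_apply, smul_eq_mul, hw']
      push_cast
      ring
    have := hJ (((-(μ/2) : ℝ) : ℂ)) w' hw'0 hmap
    rw [Complex.ofReal_re] at this
    linarith
  -- M has nonzero determinant
  have hMdet : M.det ≠ 0 := by
    rw [hMherm.det_eq_prod_eigenvalues]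
    exact ne_of_gt (Finset.prod_pos fun i _ => heig i)
  have hMunit : IsUnit M.det := isUnit_iff_ne_zero.mpr hMdet
  -- M is PosSemidef, hence PosDef since invertible
  have hMpsd : M.PosSemidef :=
    hMherm.posSemidef_iff_eigenvalues_nonneg.mpr fun i => (heig i).le
  have hMpd : M.PosDef := by
    refine PosDef.of_dotProduct_mulVec_pos hMherm fun x hx => ?_
    rcases lt_or_eq_of_le (hMpsd.dotProduct_mulVec_nonneg x) with h | h
    · exact h
    · exfalso
      have hz : M *ᵥ x = 0 := (hMpsd.dotProduct_mulVec_zero_iff x).mp h.symm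
      apply hx
      have : (M⁻¹ * M) *ᵥ x = 0 := by
        rw [← mulVec_mulVec, hz, mulVec_zero]
      rwa [nonsing_inv_mul M hMunit, one_mulVec] at this
  -- Sig is PosDef
  have hSigherm : Sig.IsHermitian := by
    show Sigᴴ = Sig
    rw [conjTranspose_eq_transpose_of_trivial, hSig.eq]
  have hSigpd : Sig.PosDef := by
    refine PosDef.of_dotProduct_mulVec_pos hSigherm fun x hx => ?_
    set y : Fin k → ℝ := S⁻¹ *ᵥ x with hy
    have hxy : S *ᵥ y = x := by
      rw [hy, mulVec_mulVec, mul_nonsing_inv S hSunit, one_mulVec]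
    have hy0 : y ≠ 0 := by
      intro h
      apply hx
      rw [← hxy, h, mulVec_zero]
    have key : dotProduct (star y) (M *ᵥ y)
        = dotProduct (star x) (Sig *ᵥ x) := by
      rw [← hxy, hM]
      simp only [star_trivial, ← mulVec_mulVec]
      rw [dotProduct_mulVec y S, ← mulVec_transpose, hSsymm]
    have := hMpd.dotProduct_mulVec_pos hy0
    rwa [key] at this
  exact ⟨isUnit_iff_ne_zero.mpr (ne_of_gt hSigpd.det_pos), hSigpd.inv⟩
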